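/- Let X be a real b×n matrix with b < n, η a nonzero real number, and G_0, …, G_{E−1} real b×m matrices, and define W^{t+1} = W^t − η·Xᵀ·G_t for t = 0, …, E−1 from an arbitrary W^0. If the matrix ∑_{t=0}^{E−1} G_t has full rank b, then the column span of W^0 − W^E equals the row span of X. -/

import Mathlib

open Matrix Finset

/-- For `E` steps of gradient descent `W^{t+1} = W^t − η·Xᵀ·G_t` with
`b < n`, `η ≠ 0`, and `∑_t G_t` of full rank `b`, the column span of `W^0 − W^E`
equals the row span of `X`. -/
theorem fedavg_colSpan_eq_rowSpan
    (b n m E : ℕ) (hbn : b < n) (η : ℝ) (hη : η ≠ 0)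
    (X : Matrix (Fin b) (Fin n) ℝ)
    (G : ℕ → Matrix (Fin b) (Fin m) ℝ)
    (W : ℕ → Matrix (Fin n) (Fin m) ℝ)
    (hW : ∀ t < E, W (t + 1) = W t - η • (Xᵀ * G t))
    (hG : (∑ t ∈ Finset.range E, G t).rank = b) :
    Submodule.span ℝ (Set.range (W 0 - W E)ᵀ) = Submodule.span ℝ (Set.range X) := by
  set S := ∑ t ∈ Finset.range E, G t with hS
  have key : ∀ k, k ≤ E → W 0 - W k = η • (Xᵀ * ∑ t ∈ Finset.range k, G t) := by
    intro k
    induction k with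
    | zero => intro _; simp
    | succ k ih =>
      intro hk
      rw [hW k (by omega), Finset.sum_range_succ, Matrix.mul_add, smul_add,
        ← ih (by omega)]
      abel
  have hWE : (W 0 - W E)ᵀ = η • (Sᵀ * X) := by
    rw [key E le_rfl, Matrix.transpose_smul, Matrix.transpose_mul,
      Matrix.transpose_transpose, hS]
  have hsurj : Function.Surjective S.mulVecLin := by
    rw [← LinearMap.range_eq_top]
    apply Submodule.eq_top_of_finrank_eq
    rw [← Matrix.rank, hG, Module.finrank_pi]
    simp
  have hcomp : (η • (Sᵀ * X)).vecMulLinear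
      = X.vecMulLinear ∘ₗ (η • S.mulVecLin) := by
    apply LinearMap.ext
    intro v
    show v ᵥ* (η • (Sᵀ * X)) = (η • (S *ᵥ v)) ᵥ* X
    ext j
    simp only [Matrix.vecMul, Matrix.mulVec, dotProduct, Matrix.smul_apply,
      Matrix.mul_apply, Matrix.transpose_apply, Pi.smul_apply, smul_eq_mul,
      Finset.mul_sum, Finset.sum_mul]
    rw [Finset.sum_comm]
    exact Finset.sum_congr rfl fun k _ => Finset.sum_congr rfl fun i _ => by ring
  have hsurj' : Function.Surjective (η • S.mulVecLin) := by
    intro y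
    obtain ⟨x, hx⟩ := hsurj (η⁻¹ • y)
    exact ⟨x, by simp [hx, smul_smul, hη]⟩
  rw [hWE]
  change Submodule.span ℝ (Set.range (η • (Sᵀ * X)).row) = Submodule.span ℝ (Set.range X.row)
  rw [← range_vecMulLinear, ← range_vecMulLinear, hcomp,
    LinearMap.range_comp, LinearMap.range_eq_top.mpr hsurj', Submodule.map_top]
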